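/- Let r, s ≥ 1 be integers, Q ∈ ℤ, N, M ≥ 0 integers, and q ∈ (0,1) a real number. Let χ = 1 if Q > 0 and χ = 0 otherwise. For n ∈ ℤ^{N+M} define n_j⁺ = n_j + (r/s)(N + ½ − j) − M + Q/s for 1 ≤ j ≤ N and n_j⁺ = n_j + (s/r)(M + ½ − (j−N)) − Q/r for N < j ≤ N+M, and set E₂(n) = ∑_{j=1}^{N+M} n_j⁺ + Q²/(2rs). Let S be the set of n ∈ ℤ^{N+M} with n_1 ≥ n_2 ≥ ⋯ ≥ n_N ≥ M + χ and n_{N+1} ≥ n_{N+2} ≥ ⋯ ≥ n_{N+M} ≥ 0. Then the family (q^{E₂(n)})_{n∈S} is summable and ∑_{n∈S} q^{E₂(n)} = q^{e} / (∏_{n=1}^{N}(1−q^n) · ∏_{m=1}^{M}(1−q^m)), where e = Q²/(2rs) + (r/(2s))N² + (s/(2r))M² + QN/s − QM/r + χ·N. -/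

import Mathlib

open Finset

/-- The pseudo-momentum `n_j⁺` for quantum numbers `n : Fin (N+M) → ℤ` (indices are
`0`-based, the paper's `n_j` is `n ⟨j-1⟩`): for `1 ≤ j ≤ N`,
`n_j⁺ = n_j + (r/s)(N + ½ − j) − M + Q/s`, and for `N < j ≤ N+M`,
`n_j⁺ = n_j + (s/r)(M + ½ − (j−N)) − Q/r`. -/
noncomputable def nPlus (r s : ℕ) (Q : ℤ) (N M : ℕ) (n : Fin (N + M) → ℤ)
    (j : Fin (N + M)) : ℝ :=
  if (j : ℕ) < N then
    (n j : ℝ) + ((r : ℝ) / s) * ((N : ℝ) + 1 / 2 - ((j : ℕ) + 1)) - (M : ℝ) + (Q : ℝ) / s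
  else
    (n j : ℝ) + ((s : ℝ) / r) * ((M : ℝ) + 1 / 2 - (((j : ℕ) : ℝ) + 1 - (N : ℝ))) - (Q : ℝ) / r

/-- The CFT-Hamiltonian eigenvalue `E₂(n) = ∑_j n_j⁺ + Q²/(2rs)`. -/
noncomputable def E2 (r s : ℕ) (Q : ℤ) (N M : ℕ) (n : Fin (N + M) → ℤ) : ℝ :=
  (∑ j : Fin (N + M), nPlus r s Q N M n j) + (Q : ℝ) ^ 2 / (2 * r * s)

/-- The set `S` of admissible quantum numbers: `n_1 ≥ ⋯ ≥ n_N ≥ M + χ` and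
`n_{N+1} ≥ ⋯ ≥ n_{N+M} ≥ 0`, where `χ = 1` if `Q > 0` and `χ = 0` otherwise. -/
def admissible (Q : ℤ) (N M : ℕ) : Set (Fin (N + M) → ℤ) :=
  {n | (∀ a b : Fin (N + M), a ≤ b → (b : ℕ) < N → n b ≤ n a)
    ∧ (∀ a : Fin (N + M), (a : ℕ) < N → (M : ℤ) + (if 0 < Q then 1 else 0) ≤ n a)
    ∧ (∀ a b : Fin (N + M), N ≤ (a : ℕ) → a ≤ b → n b ≤ n a)
    ∧ (∀ a : Fin (N + M), N ≤ (a : ℕ) → 0 ≤ n a)}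

section AuxPartition
open Finset

/-- Splitting equivalence for pi types over `Fin (N+1)`. -/
def finSuccEquivPi (N : ℕ) : (Fin (N+1) → ℕ) ≃ ℕ × (Fin N → ℕ) where
  toFun a := (a 0, fun i => a i.succ)
  invFun p := Fin.cons p.1 p.2
  left_inv a := by
    funext i
    refine Fin.cases ?_ ?_ i <;> simp
  right_inv p := by simp

lemma geom_pi {q : ℝ} (hq0 : 0 < q) (hq1 : q < 1) :
    ∀ (N : ℕ) (w : Fin N → ℕ), (∀ i, 1 ≤ w i) →
    Summable (fun a : Fin N → ℕ => ∏ i, q ^ (w i * a i)) ∧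
    ∑' a : Fin N → ℕ, ∏ i, q ^ (w i * a i) = ∏ i, (1 - q ^ (w i))⁻¹ := by
  intro N
  induction N with
  | zero =>
    intro w _
    constructor
    · exact Summable.of_finite
    · simp [tsum_eq_single (default : Fin 0 → ℕ) (fun b hb => absurd (Subsingleton.elim b default) hb)]
  | succ N ih =>
    intro w hw
    have hqw : q ^ (w 0) < 1 := pow_lt_one₀ hq0.le hq1 (by have := hw 0; omega)
    have hqw0 : (0:ℝ) ≤ q ^ (w 0) := pow_nonneg hq0.le _
    obtain ⟨ihS', ihT⟩ := ih (fun i => w i.succ) (fun i => hw _)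
    have ihS : Summable (fun a : Fin N → ℕ => ∏ i, q ^ (w i.succ * a i)) := ihS'
    have hF : Summable (fun x : ℕ => (q ^ w 0) ^ x) := summable_geometric_of_lt_one hqw0 hqw
    have hFnn : ∀ x, (0:ℝ) ≤ (q ^ w 0) ^ x := fun x => pow_nonneg hqw0 _
    have hGnn : ∀ b : Fin N → ℕ, (0:ℝ) ≤ ∏ i, q ^ (w i.succ * b i) := by
      intro b; exact Finset.prod_nonneg fun i _ => pow_nonneg hq0.le _
    have hnorm1 : Summable fun x : ℕ => ‖(q ^ w 0) ^ x‖ := by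
      refine hF.congr fun x => ?_
      rw [Real.norm_of_nonneg (hFnn x)]
    have hnorm2 : Summable fun b : Fin N → ℕ => ‖∏ i, q ^ (w i.succ * b i)‖ := by
      refine ihS.congr fun b => ?_
      rw [Real.norm_of_nonneg (hGnn b)]
    have hprod : Summable (fun p : ℕ × (Fin N → ℕ) =>
        (q ^ w 0) ^ p.1 * ∏ i, q ^ (w i.succ * p.2 i)) :=
      Summable.of_norm (Summable.mul_norm (f := fun x : ℕ => (q ^ w 0) ^ x)
        (g := fun b : Fin N → ℕ => ∏ i, q ^ (w i.succ * b i)) hnorm1 hnorm2)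
    have hkey : (fun a : Fin (N+1) → ℕ => ∏ i, q ^ (w i * a i))
        = (fun p : ℕ × (Fin N → ℕ) => (q ^ w 0) ^ p.1 * ∏ i, q ^ (w i.succ * p.2 i))
            ∘ (finSuccEquivPi N) := by
      funext a
      simp only [Function.comp_apply, finSuccEquivPi, Equiv.coe_fn_mk]
      rw [Fin.prod_univ_succ, ← pow_mul]
    constructor
    · rw [hkey]; exact hprod.comp_injective (finSuccEquivPi N).injective
    · rw [hkey]
      rw [show ((fun p : ℕ × (Fin N → ℕ) => (q ^ w 0) ^ p.1 * ∏ i, q ^ (w i.succ * p.2 i))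
          ∘ (finSuccEquivPi N))
          = fun a => (fun p : ℕ × (Fin N → ℕ) => (q ^ w 0) ^ p.1 * ∏ i, q ^ (w i.succ * p.2 i))
            ((finSuccEquivPi N) a) from rfl]
      rw [Equiv.tsum_eq (finSuccEquivPi N) (fun p : ℕ × (Fin N → ℕ) =>
        (q ^ w 0) ^ p.1 * ∏ i, q ^ (w i.succ * p.2 i))]
      rw [← tsum_mul_tsum_of_summable_norm hnorm1 hnorm2]
      rw [tsum_geometric_of_lt_one hqw0 hqw, ihT, Fin.prod_univ_succ]

/-- Specialization of `geom_pi` to weights `i+1`. -/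
lemma geom_pi' {q : ℝ} (hq0 : 0 < q) (hq1 : q < 1) (N : ℕ) :
    Summable (fun a : Fin N → ℕ => ∏ i : Fin N, q ^ (((i : ℕ) + 1) * a i)) ∧
    ∑' a : Fin N → ℕ, ∏ i : Fin N, q ^ (((i : ℕ) + 1) * a i)
      = (∏ i ∈ Finset.Icc 1 N, (1 - q ^ i))⁻¹ := by
  obtain ⟨h1, h2⟩ := geom_pi hq0 hq1 N (fun i => (i : ℕ) + 1) (fun i => Nat.le_add_left 1 _)
  refine ⟨h1, ?_⟩
  rw [h2, ← Finset.prod_inv_distrib]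
  have hIcc : ∏ x ∈ Finset.Icc 1 N, (1 - q ^ x)⁻¹ = ∏ i : Fin N, (1 - q ^ ((i : ℕ) + 1))⁻¹ := by
    rw [show Finset.Icc 1 N = Finset.Ico 1 (N+1) from by ext x; simp [Nat.lt_succ_iff],
      Finset.prod_Ico_eq_prod_range,
      Fin.prod_univ_eq_prod_range (fun i => (1 - q ^ (i + 1))⁻¹)]
    exact Finset.prod_congr rfl fun k _ => by rw [Nat.add_comm 1 k]
  rw [hIcc]

/-- Extend a tuple by zero. -/
def ext0 {N : ℕ} (a : Fin N → ℕ) : ℕ → ℤ := fun i => if h : i < N then (a ⟨i, h⟩ : ℤ) else 0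

lemma ext0_nonneg {N : ℕ} (a : Fin N → ℕ) (i : ℕ) : 0 ≤ ext0 a i := by
  unfold ext0; split <;> simp

lemma ext0_lt {N : ℕ} (a : Fin N → ℕ) (i : ℕ) (h : i < N) : ext0 a i = (a ⟨i, h⟩ : ℤ) :=
  dif_pos h

def blk (c : ℤ) {N : ℕ} (a : Fin N → ℕ) (j : ℕ) : ℤ := c + ∑ i ∈ Finset.Ico j N, ext0 a i

def build (Q : ℤ) (N M : ℕ) (p : (Fin N → ℕ) × (Fin M → ℕ)) : Fin (N + M) → ℤ :=
  fun j => if (j : ℕ) < N then blk ((M : ℤ) + (if 0 < Q then 1 else 0)) p.1 (j : ℕ)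
           else blk 0 p.2 ((j : ℕ) - N)

lemma blk_mono (c : ℤ) {N : ℕ} (a : Fin N → ℕ) {j j' : ℕ} (h : j ≤ j') :
    blk c a j' ≤ blk c a j := by
  unfold blk
  have := Finset.sum_le_sum_of_subset_of_nonneg
    (Finset.Ico_subset_Ico h le_rfl : Finset.Ico j' N ⊆ Finset.Ico j N)
    (fun i _ _ => ext0_nonneg a i)
  omega

lemma blk_lb (c : ℤ) {N : ℕ} (a : Fin N → ℕ) (j : ℕ) : c ≤ blk c a j := by
  unfold blk
  have : 0 ≤ ∑ i ∈ Finset.Ico j N, ext0 a i :=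
    Finset.sum_nonneg fun i _ => ext0_nonneg a i
  omega

lemma build_mem (Q : ℤ) (N M : ℕ) (p : (Fin N → ℕ) × (Fin M → ℕ)) :
    build Q N M p ∈ admissible Q N M := by
  refine ⟨?_, ?_, ?_, ?_⟩
  · intro a b hab hb
    have ha : (a : ℕ) < N := lt_of_le_of_lt hab hb
    simp only [build, if_pos ha, if_pos hb]
    exact blk_mono _ _ hab
  · intro a ha
    simp only [build, if_pos ha]
    exact blk_lb _ _ _
  · intro a b ha hab
    have hb : ¬ ((b : ℕ) < N) := by omega
    have ha' : ¬ ((a : ℕ) < N) := by omega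
    simp only [build, if_neg hb, if_neg ha']
    exact blk_mono _ _ (by omega)
  · intro a ha
    simp only [build, if_neg (by omega : ¬ ((a : ℕ) < N))]
    exact blk_lb _ _ _

/-- Telescoping sum over `Ico`. -/
lemma telescope (F : ℕ → ℤ) {j N : ℕ} (h : j ≤ N) :
    ∑ i ∈ Finset.Ico j N, (F i - F (i + 1)) = F j - F N := by
  rw [Finset.sum_Ico_eq_sum_range]
  have := Finset.sum_range_sub' (fun k => F (j + k)) (N - j)
  simpa [Nat.add_sub_cancel' h, Nat.add_assoc] using this

/-- Swapping a triangular double sum. -/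
lemma swap_sum (g : ℕ → ℤ) : ∀ N : ℕ,
    ∑ j ∈ Finset.range N, ∑ i ∈ Finset.Ico j N, g i
      = ∑ i ∈ Finset.range N, ((i : ℤ) + 1) * g i := by
  intro N
  induction N with
  | zero => simp
  | succ N ih =>
    rw [Finset.sum_range_succ, Finset.sum_range_succ]
    have hstep : ∀ j ∈ Finset.range N, ∑ i ∈ Finset.Ico j (N+1), g i
        = (∑ i ∈ Finset.Ico j N, g i) + g N := by
      intro j hj
      exact Finset.sum_Ico_succ_top (by simpa using (Finset.mem_range.mp hj).le) g
    rw [Finset.sum_congr rfl hstep, Finset.sum_add_distrib, ih, Finset.sum_const,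
      Finset.card_range, nsmul_eq_mul, Finset.sum_Ico_succ_top le_rfl, Finset.Ico_self,
      Finset.sum_empty]
    ring

def nuF (Q : ℤ) (N M : ℕ) (n : Fin (N + M) → ℤ) (j : ℕ) : ℤ :=
  if h : j < N then n ⟨j, by omega⟩ else (M : ℤ) + (if 0 < Q then 1 else 0)

def muF (N M : ℕ) (n : Fin (N + M) → ℤ) (j : ℕ) : ℤ :=
  if h : j < M then n ⟨N + j, by omega⟩ else 0

def unbuild (Q : ℤ) (N M : ℕ) (n : Fin (N + M) → ℤ) : (Fin N → ℕ) × (Fin M → ℕ) :=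
  (fun i => (nuF Q N M n i - nuF Q N M n (i + 1)).toNat,
   fun i => (muF N M n i - muF N M n (i + 1)).toNat)

lemma nuF_build (Q : ℤ) (N M : ℕ) (p : (Fin N → ℕ) × (Fin M → ℕ)) {j : ℕ} (h : j ≤ N) :
    nuF Q N M (build Q N M p) j
      = ((M : ℤ) + (if 0 < Q then 1 else 0)) + ∑ i ∈ Finset.Ico j N, ext0 p.1 i := by
  unfold nuF
  by_cases hj : j < N
  · rw [dif_pos hj]
    show build Q N M p ⟨j, by omega⟩ = _
    simp only [build, if_pos hj]
    rfl
  · rw [dif_neg hj]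
    have : j = N := by omega
    subst this
    simp

lemma muF_build (Q : ℤ) (N M : ℕ) (p : (Fin N → ℕ) × (Fin M → ℕ)) {j : ℕ} (h : j ≤ M) :
    muF N M (build Q N M p) j = ∑ i ∈ Finset.Ico j M, ext0 p.2 i := by
  unfold muF
  by_cases hj : j < M
  · rw [dif_pos hj]
    show build Q N M p ⟨N + j, by omega⟩ = _
    simp only [build, if_neg (by omega : ¬ (N + j < N))]
    show blk 0 p.2 (N + j - N) = _
    simp [blk]
  · rw [dif_neg hj]
    have : j = M := by omega
    subst this
    simp

lemma unbuild_build (Q : ℤ) (N M : ℕ) (p : (Fin N → ℕ) × (Fin M → ℕ)) :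
    unbuild Q N M (build Q N M p) = p := by
  unfold unbuild
  refine Prod.ext ?_ ?_
  · funext i
    show (nuF Q N M (build Q N M p) (i:ℕ) - nuF Q N M (build Q N M p) ((i:ℕ) + 1)).toNat = p.1 i
    rw [nuF_build Q N M p (le_of_lt i.isLt), nuF_build Q N M p (by omega : (i:ℕ) + 1 ≤ N)]
    rw [Finset.sum_eq_sum_Ico_succ_bot i.isLt]
    rw [ext0_lt p.1 i i.isLt]
    simp
  · funext i
    show (muF N M (build Q N M p) (i:ℕ) - muF N M (build Q N M p) ((i:ℕ) + 1)).toNat = p.2 i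
    rw [muF_build Q N M p (le_of_lt i.isLt), muF_build Q N M p (by omega : (i:ℕ) + 1 ≤ M)]
    rw [Finset.sum_eq_sum_Ico_succ_bot i.isLt]
    rw [ext0_lt p.2 i i.isLt]
    simp

lemma build_unbuild (Q : ℤ) (N M : ℕ) (n : Fin (N + M) → ℤ) (hn : n ∈ admissible Q N M) :
    build Q N M (unbuild Q N M n) = n := by
  obtain ⟨h1, h2, h3, h4⟩ := hn
  have hnu_step : ∀ i : ℕ, nuF Q N M n (i + 1) ≤ nuF Q N M n i := by
    intro i
    unfold nuF
    by_cases hi1 : i + 1 < N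
    · rw [dif_pos hi1, dif_pos (by omega : i < N)]
      exact h1 ⟨i, by omega⟩ ⟨i+1, by omega⟩ (by simp [Fin.le_def]) hi1
    · rw [dif_neg hi1]
      by_cases hi : i < N
      · rw [dif_pos hi]; exact h2 ⟨i, by omega⟩ hi
      · rw [dif_neg hi]
  have hmu_step : ∀ i : ℕ, muF N M n (i + 1) ≤ muF N M n i := by
    intro i
    unfold muF
    by_cases hi1 : i + 1 < M
    · rw [dif_pos hi1, dif_pos (by omega : i < M)]
      exact h3 ⟨N + i, by omega⟩ ⟨N + (i+1), by omega⟩ (Nat.le_add_right N i)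
        (by simp [Fin.mk_le_mk])
    · rw [dif_neg hi1]
      by_cases hi : i < M
      · rw [dif_pos hi]; exact h4 ⟨N + i, by omega⟩ (Nat.le_add_right N i)
      · rw [dif_neg hi]
  have hext1 : ∀ i : ℕ, ext0 (unbuild Q N M n).1 i = nuF Q N M n i - nuF Q N M n (i + 1) := by
    intro i
    by_cases hi : i < N
    · rw [ext0_lt _ i hi]
      show ((nuF Q N M n i - nuF Q N M n (i + 1)).toNat : ℤ) = _
      exact Int.toNat_of_nonneg (by have := hnu_step i; omega)
    · unfold ext0
      rw [dif_neg hi]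
      unfold nuF
      rw [dif_neg hi, dif_neg (by omega : ¬ (i + 1 < N))]
      ring
  have hext2 : ∀ i : ℕ, ext0 (unbuild Q N M n).2 i = muF N M n i - muF N M n (i + 1) := by
    intro i
    by_cases hi : i < M
    · rw [ext0_lt _ i hi]
      show ((muF N M n i - muF N M n (i + 1)).toNat : ℤ) = _
      exact Int.toNat_of_nonneg (by have := hmu_step i; omega)
    · unfold ext0
      rw [dif_neg hi]
      unfold muF
      rw [dif_neg hi, dif_neg (by omega : ¬ (i + 1 < M))]
      ring
  funext j
  by_cases hj : (j : ℕ) < N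
  · simp only [build, if_pos hj, blk]
    rw [Finset.sum_congr rfl (fun i _ => hext1 i), telescope _ (le_of_lt hj)]
    have hN : nuF Q N M n N = (M : ℤ) + (if 0 < Q then 1 else 0) := by
      unfold nuF; rw [dif_neg (by omega)]
    have hjv : nuF Q N M n (j : ℕ) = n j := by
      unfold nuF; rw [dif_pos hj]
    rw [hN, hjv]
    ring
  · simp only [build, if_neg hj, blk]
    rw [Finset.sum_congr rfl (fun i _ => hext2 i),
      telescope _ (by omega : (j : ℕ) - N ≤ M)]
    have hM : muF N M n M = 0 := by unfold muF; rw [dif_neg (by omega)]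
    have hjv : muF N M n ((j : ℕ) - N) = n j := by
      unfold muF
      rw [dif_pos (by omega : (j : ℕ) - N < M)]
      congr 1
      ext
      simp
      omega
    rw [hM, hjv]
    ring

lemma sum_build (Q : ℤ) (N M : ℕ) (p : (Fin N → ℕ) × (Fin M → ℕ)) :
    ∑ j : Fin (N + M), build Q N M p j
      = (N : ℤ) * ((M : ℤ) + (if 0 < Q then 1 else 0))
        + ∑ i ∈ Finset.range N, ((i : ℤ) + 1) * ext0 p.1 i
        + ∑ i ∈ Finset.range M, ((i : ℤ) + 1) * ext0 p.2 i := by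
  have h0 : ∑ j : Fin (N + M), build Q N M p j
      = ∑ j ∈ Finset.range (N + M),
          (if j < N then blk ((M : ℤ) + (if 0 < Q then 1 else 0)) p.1 j
           else blk 0 p.2 (j - N)) :=
    Fin.sum_univ_eq_sum_range
      (fun j => if j < N then blk ((M : ℤ) + (if 0 < Q then 1 else 0)) p.1 j
        else blk 0 p.2 (j - N)) (N + M)
  rw [h0, Finset.range_eq_Ico,
    ← Finset.sum_Ico_consecutive _ (Nat.zero_le N) (Nat.le_add_right N M)]
  have hpart1 : ∑ j ∈ Finset.Ico 0 N,
      (if j < N then blk ((M : ℤ) + (if 0 < Q then 1 else 0)) p.1 j else blk 0 p.2 (j - N))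
      = (N : ℤ) * ((M : ℤ) + (if 0 < Q then 1 else 0))
        + ∑ i ∈ Finset.range N, ((i : ℤ) + 1) * ext0 p.1 i := by
    rw [← Finset.range_eq_Ico]
    rw [Finset.sum_congr rfl (fun j hj => if_pos (Finset.mem_range.mp hj))]
    unfold blk
    rw [Finset.sum_add_distrib, swap_sum, Finset.sum_const, Finset.card_range, nsmul_eq_mul]
  have hpart2 : ∑ j ∈ Finset.Ico N (N + M),
      (if j < N then blk ((M : ℤ) + (if 0 < Q then 1 else 0)) p.1 j else blk 0 p.2 (j - N))
      = ∑ i ∈ Finset.range M, ((i : ℤ) + 1) * ext0 p.2 i := by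
    rw [Finset.sum_Ico_eq_sum_range]
    simp only [Nat.add_sub_cancel_left]
    rw [← swap_sum]
    refine Finset.sum_congr rfl fun k _ => ?_
    rw [if_neg (by omega : ¬ (N + k < N))]
    simp [blk]
  rw [hpart1, hpart2, Finset.range_eq_Ico]

lemma cast_W {N : ℕ} (a : Fin N → ℕ) :
    ∑ i ∈ Finset.range N, ((i : ℤ) + 1) * ext0 a i
      = ((∑ i : Fin N, ((i : ℕ) + 1) * a i : ℕ) : ℤ) := by
  rw [← Fin.sum_univ_eq_sum_range (fun i => ((i : ℤ) + 1) * ext0 a i) N]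
  push_cast
  refine Finset.sum_congr rfl fun i _ => ?_
  rw [ext0_lt a (i : ℕ) i.isLt]

lemma gauss_sum (N : ℕ) : ∑ j ∈ Finset.range N, (j : ℝ) = N * (N - 1) / 2 := by
  induction N with
  | zero => simp
  | succ N ih =>
    rw [Finset.sum_range_succ, ih]
    push_cast
    ring

lemma sum_nPlus (r s : ℕ) (hr : 1 ≤ r) (hs : 1 ≤ s) (Q : ℤ) (N M : ℕ)
    (n : Fin (N + M) → ℤ) :
    ∑ j : Fin (N + M), nPlus r s Q N M n j
      = (∑ j : Fin (N + M), (n j : ℝ))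
        + (r : ℝ) / s * (N : ℝ) ^ 2 / 2 + (s : ℝ) / r * (M : ℝ) ^ 2 / 2
        + (N : ℝ) * Q / s - (M : ℝ) * Q / r - (N : ℝ) * M := by
  have hrne : (r : ℝ) ≠ 0 := by positivity
  have hsne : (s : ℝ) ≠ 0 := by positivity
  set C : ℕ → ℝ := fun j =>
    if j < N then (r : ℝ) / s * ((N : ℝ) + 1 / 2 - ((j : ℝ) + 1)) - (M : ℝ) + (Q : ℝ) / s
    else (s : ℝ) / r * ((M : ℝ) + 1 / 2 - ((j : ℝ) + 1 - (N : ℝ))) - (Q : ℝ) / r with hC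
  have hsplit : ∀ j : Fin (N + M), nPlus r s Q N M n j = (n j : ℝ) + C (j : ℕ) := by
    intro j
    rw [hC]
    unfold nPlus
    by_cases hj : (j : ℕ) < N
    · simp only [if_pos hj]; ring
    · simp only [if_neg hj]; ring
  have hCsplit : ∑ j ∈ Finset.range (N + M), C j
      = ∑ j ∈ Finset.Ico 0 N, C j + ∑ j ∈ Finset.Ico N (N + M), C j := by
    rw [Finset.range_eq_Ico,
      ← Finset.sum_Ico_consecutive _ (Nat.zero_le N) (Nat.le_add_right N M)]
  have hp1 : ∑ j ∈ Finset.Ico 0 N, C j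
      = (N : ℝ) * ((r : ℝ) / s * ((N : ℝ) - 1 / 2) - (M : ℝ) + (Q : ℝ) / s)
        - (r : ℝ) / s * ((N : ℝ) * ((N : ℝ) - 1) / 2) := by
    rw [← Finset.range_eq_Ico]
    have : ∀ j ∈ Finset.range N, C j
        = ((r : ℝ) / s * ((N : ℝ) - 1 / 2) - (M : ℝ) + (Q : ℝ) / s) - (r : ℝ) / s * (j : ℝ) := by
      intro j hj
      rw [hC]
      simp only [if_pos (Finset.mem_range.mp hj)]
      ring
    rw [Finset.sum_congr rfl this, Finset.sum_sub_distrib, ← Finset.mul_sum, gauss_sum,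
      Finset.sum_const, Finset.card_range, nsmul_eq_mul]
  have hp2 : ∑ j ∈ Finset.Ico N (N + M), C j
      = (M : ℝ) * ((s : ℝ) / r * ((M : ℝ) - 1 / 2) - (Q : ℝ) / r)
        - (s : ℝ) / r * ((M : ℝ) * ((M : ℝ) - 1) / 2) := by
    rw [Finset.sum_Ico_eq_sum_range]
    simp only [Nat.add_sub_cancel_left]
    have : ∀ k ∈ Finset.range M, C (N + k)
        = ((s : ℝ) / r * ((M : ℝ) - 1 / 2) - (Q : ℝ) / r) - (s : ℝ) / r * (k : ℝ) := by
      intro k hk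
      rw [hC]
      simp only [if_neg (by omega : ¬ (N + k < N))]
      push_cast
      ring
    rw [Finset.sum_congr rfl this, Finset.sum_sub_distrib, ← Finset.mul_sum, gauss_sum,
      Finset.sum_const, Finset.card_range, nsmul_eq_mul]
  rw [Finset.sum_congr rfl (fun j _ => hsplit j), Finset.sum_add_distrib,
    Fin.sum_univ_eq_sum_range C (N + M), hCsplit, hp1, hp2]
  field_simp
  ring

lemma E2_build (r s : ℕ) (hr : 1 ≤ r) (hs : 1 ≤ s) (Q : ℤ) (N M : ℕ)
    (p : (Fin N → ℕ) × (Fin M → ℕ)) :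
    E2 r s Q N M (build Q N M p)
      = ((Q : ℝ) ^ 2 / (2 * r * s) + (r : ℝ) / (2 * s) * (N : ℝ) ^ 2
          + (s : ℝ) / (2 * r) * (M : ℝ) ^ 2 + (Q : ℝ) * N / s - (Q : ℝ) * M / r
          + (if 0 < Q then 1 else 0 : ℝ) * N)
        + (((∑ i : Fin N, ((i : ℕ) + 1) * p.1 i) + ∑ i : Fin M, ((i : ℕ) + 1) * p.2 i : ℕ) : ℝ) := by
  have hrne : (r : ℝ) ≠ 0 := by positivity
  have hsne : (s : ℝ) ≠ 0 := by positivity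
  unfold E2
  rw [sum_nPlus r s hr hs Q N M _]
  have hcast : (∑ j : Fin (N + M), ((build Q N M p j : ℤ) : ℝ))
      = ((∑ j : Fin (N + M), build Q N M p j : ℤ) : ℝ) := by push_cast; rfl
  rw [hcast, sum_build, cast_W p.1, cast_W p.2]
  by_cases hQ : 0 < Q
  · simp only [if_pos hQ]
    push_cast
    field_simp
    ring
  · simp only [if_neg hQ]
    push_cast
    field_simp
    ring

end AuxPartition

/-- The generating function of the eigenvalues `E₂` over the admissible set:
`∑_{n∈S} q^{E₂(n)} = q^e / (∏_{n=1}^N (1−q^n) ∏_{m=1}^M (1−q^m))` with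
`e = Q²/(2rs) + (r/(2s))N² + (s/(2r))M² + QN/s − QM/r + χN`, and the family is
summable. -/
theorem partition_function_block (r s : ℕ) (hr : 1 ≤ r) (hs : 1 ≤ s) (Q : ℤ) (N M : ℕ)
    (q : ℝ) (hq : q ∈ Set.Ioo (0 : ℝ) 1) :
    Summable (fun n : admissible Q N M => q ^ E2 r s Q N M (n : Fin (N + M) → ℤ))
    ∧ ∑' n : admissible Q N M, q ^ E2 r s Q N M (n : Fin (N + M) → ℤ)
      = q ^ ((Q : ℝ) ^ 2 / (2 * r * s) + (r : ℝ) / (2 * s) * (N : ℝ) ^ 2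
            + (s : ℝ) / (2 * r) * (M : ℝ) ^ 2 + (Q : ℝ) * N / s - (Q : ℝ) * M / r
            + (if 0 < Q then 1 else 0 : ℝ) * N)
        / ((∏ i ∈ Finset.Icc 1 N, (1 - q ^ i)) * ∏ i ∈ Finset.Icc 1 M, (1 - q ^ i)) := by
  obtain ⟨hq0, hq1⟩ := hq
  set e : ℝ := ((Q : ℝ) ^ 2 / (2 * r * s) + (r : ℝ) / (2 * s) * (N : ℝ) ^ 2
            + (s : ℝ) / (2 * r) * (M : ℝ) ^ 2 + (Q : ℝ) * N / s - (Q : ℝ) * M / r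
            + (if 0 < Q then 1 else 0 : ℝ) * N) with he
  let Φ : (Fin N → ℕ) × (Fin M → ℕ) → admissible Q N M :=
    fun p => ⟨build Q N M p, build_mem Q N M p⟩
  have hbij : Function.Bijective Φ := by
    constructor
    · intro p p' h
      have := congrArg (fun n : admissible Q N M => unbuild Q N M (n : Fin (N + M) → ℤ)) h
      simpa [Φ, unbuild_build] using this
    · rintro ⟨n, hn⟩
      exact ⟨unbuild Q N M n, Subtype.ext (build_unbuild Q N M n hn)⟩
  obtain ⟨SA, TA⟩ := geom_pi' hq0 hq1 N
  obtain ⟨SB, TB⟩ := geom_pi' hq0 hq1 M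
  set A : (Fin N → ℕ) → ℝ := fun a => ∏ i : Fin N, q ^ (((i : ℕ) + 1) * a i) with hA
  set B : (Fin M → ℕ) → ℝ := fun b => ∏ i : Fin M, q ^ (((i : ℕ) + 1) * b i) with hB
  have hAnn : ∀ a, 0 ≤ A a := fun a => Finset.prod_nonneg fun i _ => pow_nonneg hq0.le _
  have hBnn : ∀ b, 0 ≤ B b := fun b => Finset.prod_nonneg fun i _ => pow_nonneg hq0.le _
  have hnA : Summable fun a => ‖A a‖ :=
    SA.congr fun a => (Real.norm_of_nonneg (hAnn a)).symm
  have hnB : Summable fun b => ‖B b‖ :=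
    SB.congr fun b => (Real.norm_of_nonneg (hBnn b)).symm
  have hABsum : Summable (fun p : (Fin N → ℕ) × (Fin M → ℕ) => A p.1 * B p.2) :=
    Summable.of_norm (Summable.mul_norm (f := A) (g := B) hnA hnB)
  have hcomp : ∀ p : (Fin N → ℕ) × (Fin M → ℕ),
      q ^ E2 r s Q N M ((Φ p : admissible Q N M) : Fin (N + M) → ℤ)
        = q ^ e * (A p.1 * B p.2) := by
    intro p
    show q ^ E2 r s Q N M (build Q N M p) = _
    rw [E2_build r s hr hs Q N M p, Real.rpow_add hq0, Real.rpow_natCast, pow_add,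
      ← Finset.prod_pow_eq_pow_sum, ← Finset.prod_pow_eq_pow_sum, ← he]
  constructor
  · refine ((Equiv.ofBijective Φ hbij).summable_iff).mp ?_
    have hfE : ((fun n : admissible Q N M => q ^ E2 r s Q N M (n : Fin (N + M) → ℤ))
        ∘ (Equiv.ofBijective Φ hbij)) = fun p => q ^ e * (A p.1 * B p.2) :=
      funext fun p => hcomp p
    rw [hfE]
    exact hABsum.mul_left _
  · rw [← Equiv.tsum_eq (Equiv.ofBijective Φ hbij)
      (fun n : admissible Q N M => q ^ E2 r s Q N M (n : Fin (N + M) → ℤ))]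
    rw [show ∑' (c : (Fin N → ℕ) × (Fin M → ℕ)),
        q ^ E2 r s Q N M (((Equiv.ofBijective Φ hbij) c : admissible Q N M) : Fin (N + M) → ℤ)
        = ∑' p : (Fin N → ℕ) × (Fin M → ℕ), q ^ e * (A p.1 * B p.2)
      from tsum_congr fun p => hcomp p]
    rw [tsum_mul_left, ← tsum_mul_tsum_of_summable_norm hnA hnB, TA, TB]
    rw [div_eq_mul_inv, mul_inv]
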